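/- Let k be a field, S a finite-dimensional split k-algebra, and R a subalgebra of S. Then R is a constrained subalgebra of S if and only if there exists a finite-dimensional left S-module M, with representation ρ: S → End_k(M), such that every s ∈ S with ρ(s) ∈ [R, End_k(M)] (the span of all ρ(r)φ − φρ(r), r ∈ R, φ ∈ End_k(M)) lies in [R,S]. -/
import Mathlib


open TensorProduct

namespace Paper

variable (k S : Type*) [Field k] [Ring S] [Algebra k S]

/-- The `k`-linear span of all commutators `x*y - y*x` in `S`; denoted `[S,S]` in the paper. -/
def commutatorSpan : Submodule k S :=
  Submodule.span k {x : S | ∃ a b : S, x = a * b - b * a}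

/-- `S` is (radically) constrained if its Jacobson radical is contained in `[S,S]`. -/
def IsConstrained : Prop :=
  ((⊥ : Ideal S).jacobson : Set S) ⊆ (commutatorSpan k S : Set S)

/-- `S` is split if every endomorphism of a simple left `S`-module is a scalar. -/
def IsSplitAlgebra : Prop :=
  ∀ (L : Type) [AddCommGroup L] [Module S L], IsSimpleModule S L →
    ∀ f : L →ₗ[S] L, ∃ c : k, ∀ x : L, f x = algebraMap k S c • x

/-- A bundled finite-dimensional left `S`-module (with its underlying `k`-structure). -/
structure FDModule where
  V : Type
  [addCommGroup : AddCommGroup V]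
  [modk : Module k V]
  [modS : Module S V]
  [tower : IsScalarTower k S V]
  [scomm : SMulCommClass S k V]
  [fd : FiniteDimensional k V]

attribute [instance] FDModule.addCommGroup FDModule.modk FDModule.modS FDModule.tower
  FDModule.scomm FDModule.fd

variable (M : Type*) [AddCommGroup M] [Module k M] [Module S M] [IsScalarTower k S M]
  [SMulCommClass S k M]

/-- The twisted trace function `χ_θ ∈ S*`, `χ_θ(s) = trace (θ ∘ ρ(s))`, where `ρ` is the
representation of `S` on `M`. -/
noncomputable def twCharOf (θ : M →ₗ[k] M) : Module.Dual k S :=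
  (LinearMap.trace k M).comp
    ((LinearMap.llcomp k M M M θ).comp (Algebra.lsmul k k M).toLinearMap)

variable {k S}

/-- The twisted trace function of a bundled module. -/
noncomputable def twChar (N : FDModule k S) (θ : N.V →ₗ[k] N.V) : Module.Dual k S :=
  twCharOf k S N.V θ

/-- The natural character `χ_V ∈ S*` of a finite-dimensional module. -/
noncomputable def natChar (N : FDModule k S) : Module.Dual k S :=
  twChar N LinearMap.id

variable (k S)

/-- `C₀(S)`: the span of the natural characters of all finite-dimensional `S`-modules. -/
noncomputable def charSpan : Submodule k (Module.Dual k S) :=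
  Submodule.span k (Set.range fun N : FDModule k S => natChar N)

end Paper

namespace Paper

variable (k S : Type*) [Field k] [Ring S] [Algebra k S]

/-- `[R,S]`: the `k`-span of all commutators `r*s - s*r` with `r ∈ R`, `s ∈ S`. -/
def relCommutator (R : Subalgebra k S) : Submodule k S :=
  Submodule.span k {x : S | ∃ r ∈ R, ∃ s : S, x = r * s - s * r}

/-- `C₀(S,R)`: the span of all twisted trace functions `χ_θ` with `θ ∈ End_R(V)`, `V` ranging
over finite-dimensional `S`-modules. -/
noncomputable def relC0 (R : Subalgebra k S) : Submodule k (Module.Dual k S) :=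
  Submodule.span k {f | ∃ (N : FDModule k S) (θ : N.V →ₗ[k] N.V),
    (∀ r ∈ R, ∀ v : N.V, θ (r • v) = r • θ v) ∧ f = twChar N θ}

/-- `R` is a constrained subalgebra of `S` if `C₀(S,R) = C(S,R)`, where
`C(S,R) = {f ∈ S* : f vanishes on [R,S]}`. -/
def IsConstrainedSubalgebra (R : Subalgebra k S) : Prop :=
  relC0 k S R = (relCommutator k S R).dualAnnihilator

end Paper


section Aux

open LinearMap

variable (k : Type*) [Field k] (V : Type*) [AddCommGroup V] [Module k V] [FiniteDimensional k V]

/-- The trace pairing on `End_k(V)` as a linear map to the dual. -/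
noncomputable def trPair : (V →ₗ[k] V) →ₗ[k] Module.Dual k (V →ₗ[k] V) :=
  (LinearMap.llcomp k (V →ₗ[k] V) (V →ₗ[k] V) k (LinearMap.trace k V)).comp
    (LinearMap.llcomp k V V V)

@[simp] lemma trPair_apply (φ ψ : V →ₗ[k] V) :
    trPair k V φ ψ = LinearMap.trace k V (φ ∘ₗ ψ) := rfl

lemma trPair_injective : Function.Injective (trPair k V) := by
  rw [← LinearMap.ker_eq_bot, eq_bot_iff]
  intro φ hφ
  rw [LinearMap.mem_ker] at hφ
  have hz : ∀ v : V, φ v = 0 := by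
    intro v
    rw [← Module.forall_dual_apply_eq_zero_iff k]
    intro f
    have h1 : trPair k V φ (dualTensorHom k V V (f ⊗ₜ v)) = 0 := by rw [hφ]; rfl
    have h2 : φ ∘ₗ dualTensorHom k V V (f ⊗ₜ v) = dualTensorHom k V V (f ⊗ₜ φ v) := by
      ext x; simp
    rwa [trPair_apply, h2, LinearMap.trace_eq_contract_apply, contractLeft_apply] at h1
  exact (Submodule.mem_bot k).mpr (LinearMap.ext hz)

lemma trPair_surjective : Function.Surjective (trPair k V) :=
  (LinearMap.injective_iff_surjective_of_finrank_eq_finrank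
    (Subspace.dual_finrank_eq).symm).mp (trPair_injective k V)

lemma trace_comm_of_commute (θ a b : V →ₗ[k] V) (hc : θ * a = a * θ) :
    LinearMap.trace k V (θ * (a * b - b * a)) = 0 := by
  have e1 : LinearMap.trace k V (θ * (a * b)) = LinearMap.trace k V (θ * (b * a)) := by
    calc LinearMap.trace k V (θ * (a * b))
        = LinearMap.trace k V ((θ * a) * b) := by rw [mul_assoc]
      _ = LinearMap.trace k V ((a * θ) * b) := by rw [hc]
      _ = LinearMap.trace k V (a * (θ * b)) := by rw [mul_assoc]
      _ = LinearMap.trace k V ((θ * b) * a) := LinearMap.trace_mul_comm k a _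
      _ = LinearMap.trace k V (θ * (b * a)) := by rw [mul_assoc]
  rw [mul_sub, map_sub, e1, sub_self]

theorem mem_commSpan_iff {ι : Sort*} (a : ι → (V →ₗ[k] V)) (ψ : V →ₗ[k] V) :
    ψ ∈ Submodule.span k {x : V →ₗ[k] V | ∃ i, ∃ φ : V →ₗ[k] V, x = a i ∘ₗ φ - φ ∘ₗ a i} ↔
      ∀ θ : V →ₗ[k] V, (∀ i, θ ∘ₗ a i = a i ∘ₗ θ) →
        LinearMap.trace k V (θ ∘ₗ ψ) = 0 := by
  set W := Submodule.span k
    {x : V →ₗ[k] V | ∃ i, ∃ φ : V →ₗ[k] V, x = a i ∘ₗ φ - φ ∘ₗ a i} with hW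
  have key : ∀ θ : V →ₗ[k] V,
      trPair k V θ ∈ W.dualAnnihilator ↔ ∀ i, θ ∘ₗ a i = a i ∘ₗ θ := by
    intro θ
    rw [Submodule.mem_dualAnnihilator]
    constructor
    · intro h i
      have h0 : trPair k V (θ ∘ₗ a i - a i ∘ₗ θ) = 0 := by
        apply LinearMap.ext
        intro φ
        have hgen : (a i ∘ₗ φ - φ ∘ₗ a i) ∈ W :=
          Submodule.subset_span ⟨i, φ, rfl⟩
        have h1 := h _ hgen
        simp only [trPair_apply, LinearMap.comp_sub, LinearMap.sub_comp, map_sub,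
          LinearMap.sub_apply, LinearMap.zero_apply, ← Module.End.mul_eq_comp] at h1 ⊢
        have e1 : LinearMap.trace k V ((a i * θ) * φ)
            = LinearMap.trace k V (θ * (φ * a i)) := by
          rw [mul_assoc, LinearMap.trace_mul_comm, mul_assoc]
        have e2 : LinearMap.trace k V ((θ * a i) * φ)
            = LinearMap.trace k V (θ * (a i * φ)) := by rw [mul_assoc]
        rw [e2, e1]; exact h1
      have := trPair_injective k V (by rw [h0, map_zero] : trPair k V (θ ∘ₗ a i - a i ∘ₗ θ) = trPair k V 0)
      exact sub_eq_zero.mp this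
    · intro hcomm
      intro w hw
      have : W ≤ LinearMap.ker (trPair k V θ) := by
        rw [Submodule.span_le]
        rintro x ⟨i, φ, rfl⟩
        rw [SetLike.mem_coe, LinearMap.mem_ker, trPair_apply]
        have hc : θ * a i = a i * θ := by
          simpa only [Module.End.mul_eq_comp] using hcomm i
        have e1 : LinearMap.trace k V (θ * (a i * φ))
            = LinearMap.trace k V (θ * (φ * a i)) := by
          calc LinearMap.trace k V (θ * (a i * φ))
              = LinearMap.trace k V ((θ * a i) * φ) := by rw [mul_assoc]
            _ = LinearMap.trace k V ((a i * θ) * φ) := by rw [hc]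
            _ = LinearMap.trace k V (a i * (θ * φ)) := by rw [mul_assoc]
            _ = LinearMap.trace k V ((θ * φ) * a i) := LinearMap.trace_mul_comm k (a i) _
            _ = LinearMap.trace k V (θ * (φ * a i)) := by rw [mul_assoc]
        simp only [LinearMap.comp_sub, ← Module.End.mul_eq_comp]
        rw [mul_sub, map_sub, e1, sub_self]
      exact this hw
  constructor
  · intro hψ θ hθ
    have h1 := (key θ).mpr hθ
    rw [Submodule.mem_dualAnnihilator] at h1
    simpa using h1 ψ hψ
  · intro h
    rw [show W = W.dualAnnihilator.dualCoannihilator from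
      (Subspace.dualAnnihilator_dualCoannihilator_eq).symm] at hW ⊢
    rw [Submodule.mem_dualCoannihilator]
    intro f hf
    obtain ⟨θ, rfl⟩ := trPair_surjective k V f
    exact h θ ((key θ).mp hf)

lemma dualAnnihilator_anti {M : Type*} [AddCommGroup M] [Module k M]
    {U W : Submodule k M} (h : U ≤ W) : W.dualAnnihilator ≤ U.dualAnnihilator := by
  intro f hf
  rw [Submodule.mem_dualAnnihilator] at hf ⊢
  exact fun x hx => hf x (h hx)

end Aux


namespace Paper

section Helpers

variable {k S : Type} [Field k] [Ring S] [Algebra k S]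

lemma twChar_apply (N : FDModule k S) (θ : N.V →ₗ[k] N.V) (s : S) :
    twChar N θ s = LinearMap.trace k N.V (θ ∘ₗ (Algebra.lsmul k k N.V s : N.V →ₗ[k] N.V)) := rfl

/-- The commutator-span set of the statement, rewritten with a subtype index. -/
lemma commSet_eq (N : FDModule k S) (R : Subalgebra k S) :
    {x : N.V →ₗ[k] N.V | ∃ r ∈ R, ∃ φ : N.V →ₗ[k] N.V,
        x = (Algebra.lsmul k k N.V (r : S)) ∘ₗ φ - φ ∘ₗ (Algebra.lsmul k k N.V (r : S))} =
      {x : N.V →ₗ[k] N.V | ∃ i : R, ∃ φ : N.V →ₗ[k] N.V,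
        x = (Algebra.lsmul k k N.V (i : S)) ∘ₗ φ - φ ∘ₗ (Algebra.lsmul k k N.V (i : S))} := by
  ext x
  constructor
  · rintro ⟨r, hr, φ, h⟩
    exact ⟨⟨r, hr⟩, φ, h⟩
  · rintro ⟨⟨r, hr⟩, φ, h⟩
    exact ⟨r, hr, φ, h⟩

end Helpers

end Paper

open Paper in
/-- Proposition 3.5(ii): `R` is a constrained subalgebra of `S` if and only if there is a
finite-dimensional `S`-module `M` such that every `s ∈ S` whose action `ρ(s)` lies in
`[R, End_k(M)]` belongs to `[R,S]`. -/
theorem statement9 (k S : Type) [Field k] [Ring S] [Algebra k S] [FiniteDimensional k S]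
    (hsplit : IsSplitAlgebra k S) (R : Subalgebra k S) :
    IsConstrainedSubalgebra k S R ↔
      ∃ N : FDModule k S, ∀ s : S, (Algebra.lsmul k k N.V s : N.V →ₗ[k] N.V) ∈
          Submodule.span k {x : N.V →ₗ[k] N.V | ∃ r ∈ R, ∃ φ : N.V →ₗ[k] N.V,
            x = (Algebra.lsmul k k N.V (r : S)) ∘ₗ φ - φ ∘ₗ (Algebra.lsmul k k N.V (r : S))} →
        s ∈ relCommutator k S R := by
  classical
  constructor
  · -- constrained → the module exists
    intro hc
    have hc' : relC0 k S R = (relCommutator k S R).dualAnnihilator := hc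
    have hX : relC0 k S R = Submodule.span k {f : Module.Dual k S |
        ∃ (N : FDModule k S) (θ : N.V →ₗ[k] N.V),
          (∀ r ∈ R, ∀ v : N.V, θ (r • v) = r • θ v) ∧ f = twChar N θ} := rfl
    haveI : IsNoetherian k (Module.Dual k S) := IsNoetherian.iff_fg.mpr inferInstance
    obtain ⟨G, hG⟩ := IsNoetherian.noetherian (relC0 k S R)
    have hGX : ∀ g : {x // x ∈ G}, ∃ t : Finset (Module.Dual k S),
        ↑t ⊆ {f : Module.Dual k S | ∃ (N : FDModule k S) (θ : N.V →ₗ[k] N.V),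
          (∀ r ∈ R, ∀ v : N.V, θ (r • v) = r • θ v) ∧ f = twChar N θ} ∧
        (g : Module.Dual k S) ∈ Submodule.span k (↑t : Set (Module.Dual k S)) := by
      intro g
      have h1 : (g : Module.Dual k S) ∈ relC0 k S R := by
        rw [← hG]; exact Submodule.subset_span g.2
      rw [hX] at h1
      exact Submodule.mem_span_finite_of_mem_span h1
    choose t ht1 ht2 using hGX
    set T : Finset (Module.Dual k S) := G.attach.biUnion t with hT
    have hTX : ∀ f ∈ T, ∃ (N : FDModule k S) (θ : N.V →ₗ[k] N.V),
        (∀ r ∈ R, ∀ v : N.V, θ (r • v) = r • θ v) ∧ f = twChar N θ := by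
      intro f hf
      rw [hT, Finset.mem_biUnion] at hf
      obtain ⟨g, -, hg⟩ := hf
      exact ht1 g hg
    have hTspan : relC0 k S R = Submodule.span k (↑T : Set (Module.Dual k S)) := by
      apply le_antisymm
      · rw [← hG]
        apply Submodule.span_le.mpr
        intro g hg
        refine Submodule.span_mono ?_ (ht2 ⟨g, hg⟩)
        exact_mod_cast Finset.subset_biUnion_of_mem t (Finset.mem_attach G ⟨g, hg⟩)
      · rw [hX]
        apply Submodule.span_mono
        intro f hf
        exact hTX f hf
    have hX2 : ∀ i : {f // f ∈ T}, ∃ (N : FDModule k S) (θ : N.V →ₗ[k] N.V),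
        (∀ r ∈ R, ∀ v : N.V, θ (r • v) = r • θ v) ∧
          (i : Module.Dual k S) = twChar N θ := fun i => hTX i.1 i.2
    choose NI θI hcommI hfI using hX2
    refine ⟨{ V := ∀ i : {f // f ∈ T}, (NI i).V }, ?_⟩
    intro s hs
    rw [commSet_eq] at hs
    have h := (mem_commSpan_iff k _ (fun i : R =>
      (Algebra.lsmul k k (∀ i : {f // f ∈ T}, (NI i).V) (i : S) :
        _ →ₗ[k] _)) _).mp hs
    have hrc : relCommutator k S R = (relC0 k S R).dualCoannihilator := by
      rw [hc']
      exact (Subspace.dualAnnihilator_dualCoannihilator_eq).symm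
    rw [hrc, Submodule.mem_dualCoannihilator]
    intro f hf
    rw [hTspan] at hf
    have hker : Submodule.span k (↑T : Set (Module.Dual k S)) ≤
        LinearMap.ker (Module.Dual.eval k S s) := by
      apply Submodule.span_le.mpr
      intro f hfT
      rw [SetLike.mem_coe, LinearMap.mem_ker, Module.Dual.eval_apply]
      have hfT' : f ∈ T := hfT
      obtain ⟨i, rfl⟩ : ∃ i : {f // f ∈ T}, (i : Module.Dual k S) = f := ⟨⟨f, hfT'⟩, rfl⟩
      rw [hfI i, twChar_apply]
      set θhat : (∀ j : {f // f ∈ T}, (NI j).V) →ₗ[k] (∀ j : {f // f ∈ T}, (NI j).V) :=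
        (LinearMap.single k (fun j : {f // f ∈ T} => (NI j).V) i) ∘ₗ
          ((θI i) ∘ₗ (LinearMap.proj i)) with hθhat
      have hcommhat : ∀ j : R,
          θhat ∘ₗ (Algebra.lsmul k k (∀ j : {f // f ∈ T}, (NI j).V) (j : S))
            = (Algebra.lsmul k k (∀ j : {f // f ∈ T}, (NI j).V) (j : S)) ∘ₗ θhat := by
        intro j
        apply LinearMap.ext
        intro v
        funext j'
        by_cases hj : j' = i
        · subst hj
          simp only [hθhat, LinearMap.comp_apply, Algebra.lsmul_coe,
            LinearMap.coe_single, LinearMap.proj_apply, Pi.smul_apply,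
            Pi.single_eq_same]
          exact hcommI j' (j : S) j.2 (v j')
        · simp only [hθhat, LinearMap.comp_apply, Algebra.lsmul_coe,
            LinearMap.coe_single, LinearMap.proj_apply, Pi.smul_apply,
            Pi.single_eq_of_ne hj, smul_zero]
      have htr : LinearMap.trace k _ (θhat ∘ₗ
            (Algebra.lsmul k k (∀ j : {f // f ∈ T}, (NI j).V) s))
          = LinearMap.trace k (NI i).V
            ((θI i) ∘ₗ (Algebra.lsmul k k (NI i).V s : (NI i).V →ₗ[k] (NI i).V)) := by
        rw [hθhat, LinearMap.comp_assoc, LinearMap.trace_comp_comm']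
        congr 1
        apply LinearMap.ext
        intro x
        simp only [LinearMap.comp_apply, LinearMap.coe_single, LinearMap.proj_apply,
          Algebra.lsmul_coe, Pi.smul_apply, Pi.single_eq_same]
      rw [← htr]
      exact h θhat hcommhat
    have := hker hf
    rw [LinearMap.mem_ker, Module.Dual.eval_apply] at this
    exact this
  · -- the module exists → constrained
    rintro ⟨N, hN⟩
    show relC0 k S R = (relCommutator k S R).dualAnnihilator
    apply le_antisymm
    · unfold relC0
      apply Submodule.span_le.mpr
      rintro f ⟨N', θ, hθ, rfl⟩
      rw [SetLike.mem_coe, Submodule.mem_dualAnnihilator]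
      intro w hw
      have hker : relCommutator k S R ≤ LinearMap.ker (twChar N' θ) := by
        unfold relCommutator
        apply Submodule.span_le.mpr
        rintro x ⟨r, hr, s, rfl⟩
        rw [SetLike.mem_coe, LinearMap.mem_ker]
        have hcomp : θ * (Algebra.lsmul k k N'.V r : N'.V →ₗ[k] N'.V)
            = (Algebra.lsmul k k N'.V r : N'.V →ₗ[k] N'.V) * θ := by
          apply LinearMap.ext
          intro v
          exact hθ r hr v
        have hm : (Algebra.lsmul k k N'.V (r * s - s * r) : N'.V →ₗ[k] N'.V)
            = (Algebra.lsmul k k N'.V r : N'.V →ₗ[k] N'.V)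
                * (Algebra.lsmul k k N'.V s : N'.V →ₗ[k] N'.V)
              - (Algebra.lsmul k k N'.V s : N'.V →ₗ[k] N'.V)
                * (Algebra.lsmul k k N'.V r : N'.V →ₗ[k] N'.V) := by
          rw [map_sub, map_mul, map_mul]
        rw [twChar_apply, ← Module.End.mul_eq_comp, hm]
        exact trace_comm_of_commute k N'.V θ _ _ hcomp
      exact LinearMap.mem_ker.mp (hker hw)
    · set D := Submodule.span k {f : Module.Dual k S | ∃ θ : N.V →ₗ[k] N.V,
        (∀ r ∈ R, ∀ v : N.V, θ (r • v) = r • θ v) ∧ f = twChar N θ} with hD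
      have hD1 : D ≤ relC0 k S R := by
        rw [hD]
        apply Submodule.span_le.mpr
        rintro f ⟨θ, hθ, rfl⟩
        exact Submodule.subset_span ⟨N, θ, hθ, rfl⟩
      have hD2 : D.dualCoannihilator ≤ relCommutator k S R := by
        intro s hs
        rw [Submodule.mem_dualCoannihilator] at hs
        apply hN
        rw [commSet_eq]
        apply (mem_commSpan_iff k N.V (fun i : R =>
          (Algebra.lsmul k k N.V (i : S) : N.V →ₗ[k] N.V)) _).mpr
        intro θ hθ
        have hθ' : ∀ r ∈ R, ∀ v : N.V, θ (r • v) = r • θ v := by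
          intro r hr v
          have h0 := congrArg (fun g : N.V →ₗ[k] N.V => g v) (hθ ⟨r, hr⟩)
          simpa using h0
        have hmem : twChar N θ ∈ D := Submodule.subset_span ⟨θ, hθ', rfl⟩
        exact hs _ hmem
      calc (relCommutator k S R).dualAnnihilator
          ≤ D.dualCoannihilator.dualAnnihilator := dualAnnihilator_anti k hD2
        _ = D := Subspace.dualCoannihilator_dualAnnihilator_eq
        _ ≤ relC0 k S R := hD1
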